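/- arXiv:1705.03188 — 8 statements merged into one kernel-verified Lean document; each statement's English description precedes it below -/
import Mathlib

section
/- Let F be ℝ or ℂ and let n ≥ 2. Suppose ℓ_1, …, ℓ_p are homogeneous linear forms in F[x_1,…,x_n] and L_1, …, L_n are linearly independent homogeneous linear forms in F[x_1,…,x_n] such that ℓ_1·ℓ_2⋯ℓ_p = ∏_{1 ≤ i < j ≤ n} (L_i − L_j). Then p = n(n−1)/2 and the dimension of the F-linear span of {ℓ_1, …, ℓ_p} equals n − 1. -/
open MvPolynomial

/-- A homogeneous linear form `c₁x₁ + ⋯ + cₙxₙ`. -/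
def IsHomLin {F : Type*} [Field F] {n : ℕ} (f : MvPolynomial (Fin n) F) : Prop :=
  ∃ c : Fin n → F, f = ∑ j, C (c j) * X j

section Aux
variable {σ : Type*}

theorem VA.eq_C_of_totalDegree_eq_zero {R : Type*} [CommSemiring R] {p : MvPolynomial σ R}
    (hp : p.totalDegree = 0) : p = C (coeff 0 p) := by
  classical
  ext m
  obtain rfl | hm := eq_or_ne m 0
  · simp
  · rw [coeff_C, if_neg fun h => hm h.symm]
    by_contra h
    have hmem : m ∈ p.support := mem_support_iff.mpr h
    have h2 := (MvPolynomial.totalDegree_eq_zero_iff (p := p)).mp hp m hmem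
    exact hm (Finsupp.ext h2)

theorem VA.top_homogeneousComponent_ne_zero {R : Type*} [CommSemiring R] {p : MvPolynomial σ R}
    (hp : p ≠ 0) : homogeneousComponent p.totalDegree p ≠ 0 := by
  obtain ⟨m, hm, hdeg⟩ := p.support.exists_mem_eq_sup (support_nonempty.mpr hp)
      (fun s => s.sum fun _ e => e)
  intro h0
  have hc : coeff m (homogeneousComponent p.totalDegree p) = coeff m p := by
    rw [coeff_homogeneousComponent, if_pos]
    exact hdeg.symm
  rw [h0] at hc
  exact mem_support_iff.mp hm hc.symm

end Aux

section Aux2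
variable {σ : Type*}

theorem VA.lower_totalDegree_lt {R : Type*} [CommRing R] {r : MvPolynomial σ R}
    (h : r - homogeneousComponent r.totalDegree r ≠ 0) :
    (r - homogeneousComponent r.totalDegree r).totalDegree < r.totalDegree := by
  classical
  rcases Nat.eq_zero_or_pos r.totalDegree with h0 | h0
  · exfalso
    apply h
    rw [h0, homogeneousComponent_zero, VA.eq_C_of_totalDegree_eq_zero h0, coeff_C, if_pos rfl,
      sub_self]
  rw [totalDegree]
  rw [Finset.sup_lt_iff h0]
  intro d hd
  have hdne : coeff d (r - homogeneousComponent r.totalDegree r) ≠ 0 := mem_support_iff.mp hd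
  have hdeg : d.degree ≠ r.totalDegree := by
    intro hdd
    apply hdne
    rw [coeff_sub, coeff_homogeneousComponent, if_pos hdd, sub_self]
  have hcr : coeff d r ≠ 0 := by
    intro h'
    apply hdne
    rw [coeff_sub, coeff_homogeneousComponent, h']
    split <;> simp
  have hle : (d.sum fun _ e => e) ≤ r.totalDegree := le_totalDegree (mem_support_iff.mpr hcr)
  exact lt_of_le_of_ne hle hdeg

theorem VA.totalDegree_mul_eq {R : Type*} [CommRing R] [IsDomain R] {p q : MvPolynomial σ R}
    (hp : p ≠ 0) (hq : q ≠ 0) :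
    (p * q).totalDegree = p.totalDegree + q.totalDegree := by
  set a := p.totalDegree with ha
  set b := q.totalDegree with hb
  set P := homogeneousComponent a p with hP
  set Q := homogeneousComponent b q with hQ
  have hPhom : P.IsHomogeneous a := homogeneousComponent_isHomogeneous a p
  have hQhom : Q.IsHomogeneous b := homogeneousComponent_isHomogeneous b q
  have hP0 : P ≠ 0 := VA.top_homogeneousComponent_ne_zero hp
  have hQ0 : Q ≠ 0 := VA.top_homogeneousComponent_ne_zero hq
  have hp'le : (p - P).totalDegree ≤ a ∧ ((p - P) ≠ 0 → (p - P).totalDegree < a) := by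
    rcases eq_or_ne (p - P) 0 with h | h
    · simp [h]
    · exact ⟨(VA.lower_totalDegree_lt h).le, fun _ => VA.lower_totalDegree_lt h⟩
  have hq'le : (q - Q).totalDegree ≤ b ∧ ((q - Q) ≠ 0 → (q - Q).totalDegree < b) := by
    rcases eq_or_ne (q - Q) 0 with h | h
    · simp [h]
    · exact ⟨(VA.lower_totalDegree_lt h).le, fun _ => VA.lower_totalDegree_lt h⟩
  have hzero : ∀ r s : MvPolynomial σ R, r.totalDegree + s.totalDegree < a + b →
      homogeneousComponent (a + b) (r * s) = 0 := fun r s h =>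
    homogeneousComponent_eq_zero _ _ (lt_of_le_of_lt (totalDegree_mul r s) h)
  have h1 : homogeneousComponent (a + b) (P * (q - Q)) = 0 := by
    rcases eq_or_ne (q - Q) 0 with h | h
    · rw [h, mul_zero, map_zero]
    · exact hzero _ _ (by
        have := hq'le.2 h
        have := hPhom.totalDegree_le
        omega)
  have h2 : homogeneousComponent (a + b) ((p - P) * Q) = 0 := by
    rcases eq_or_ne (p - P) 0 with h | h
    · rw [h, zero_mul, map_zero]
    · exact hzero _ _ (by
        have := hp'le.2 h
        have := hQhom.totalDegree_le
        omega)
  have h3 : homogeneousComponent (a + b) ((p - P) * (q - Q)) = 0 := by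
    rcases eq_or_ne (p - P) 0 with h | h
    · rw [h, zero_mul, map_zero]
    rcases eq_or_ne (q - Q) 0 with h' | h'
    · rw [h', mul_zero, map_zero]
    · exact hzero _ _ (by
        have := hp'le.2 h
        have := hq'le.2 h'
        omega)
  have hPQ : homogeneousComponent (a + b) (P * Q) = P * Q := by
    rw [homogeneousComponent_of_mem ((mem_homogeneousSubmodule _ _).mpr (hPhom.mul hQhom)),
      if_pos rfl]
  have hdecomp : p * q = P * Q + (P * (q - Q) + ((p - P) * Q + (p - P) * (q - Q))) := by ring
  have key : homogeneousComponent (a + b) (p * q) = P * Q := by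
    rw [hdecomp, map_add, map_add, map_add, hPQ, h1, h2, h3]
    ring
  refine le_antisymm (totalDegree_mul p q) (le_of_not_gt fun hlt => ?_)
  have h0 := homogeneousComponent_eq_zero (a + b) (p * q) hlt
  rw [key] at h0
  exact mul_ne_zero hP0 hQ0 h0

end Aux2

section Aux3
variable {σ : Type*}

theorem VA.totalDegree_eq_zero_of_isUnit {R : Type*} [CommRing R] [IsDomain R]
    {p : MvPolynomial σ R} (h : IsUnit p) : p.totalDegree = 0 := by
  obtain ⟨u, rfl⟩ := h
  have h1 : (u : MvPolynomial σ R) * ((u⁻¹ : _) : MvPolynomial σ R) = 1 := u.mul_inv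
  have h0 : (u : MvPolynomial σ R) ≠ 0 := u.ne_zero
  have h0' : ((u⁻¹ : _) : MvPolynomial σ R) ≠ 0 := u⁻¹.ne_zero
  have h2 := VA.totalDegree_mul_eq h0 h0'
  rw [h1, totalDegree_one] at h2
  omega

theorem VA.irreducible_of_homogeneous_one {F : Type*} [Field F] {f : MvPolynomial σ F}
    (h1 : f.IsHomogeneous 1) (h0 : f ≠ 0) : Irreducible f := by
  constructor
  · intro hu
    have h2 := VA.totalDegree_eq_zero_of_isUnit hu
    rw [h1.totalDegree h0] at h2
    exact one_ne_zero h2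
  · intro g h hf
    have hg0 : g ≠ 0 := by rintro rfl; rw [zero_mul] at hf; exact h0 hf
    have hh0 : h ≠ 0 := by rintro rfl; rw [mul_zero] at hf; exact h0 hf
    have htd := VA.totalDegree_mul_eq hg0 hh0
    rw [← hf, h1.totalDegree h0] at htd
    rcases (by omega : g.totalDegree = 0 ∨ h.totalDegree = 0) with hz | hz
    · left
      have hg := VA.eq_C_of_totalDegree_eq_zero hz
      have hcg : coeff 0 g ≠ 0 := fun hc => hg0 (by rw [hg, hc, map_zero])
      rw [hg]
      exact (isUnit_iff_ne_zero.mpr hcg).map (C : F →+* MvPolynomial σ F)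
    · right
      have hg := VA.eq_C_of_totalDegree_eq_zero hz
      have hcg : coeff 0 h ≠ 0 := fun hc => hh0 (by rw [hg, hc, map_zero])
      rw [hg]
      exact (isUnit_iff_ne_zero.mpr hcg).map (C : F →+* MvPolynomial σ F)

theorem VA.eq_smul_of_dvd {F : Type*} [Field F] {f g : MvPolynomial σ F}
    (hf1 : f.IsHomogeneous 1) (hg1 : g.IsHomogeneous 1) (hf0 : f ≠ 0) (hg0 : g ≠ 0)
    (hdvd : f ∣ g) : ∃ a : F, a ≠ 0 ∧ g = a • f := by
  obtain ⟨h, rfl⟩ := hdvd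
  have hh0 : h ≠ 0 := right_ne_zero_of_mul hg0
  have htd := VA.totalDegree_mul_eq hf0 hh0
  rw [hg1.totalDegree hg0, hf1.totalDegree hf0] at htd
  have hh : h.totalDegree = 0 := by omega
  have hC := VA.eq_C_of_totalDegree_eq_zero hh
  refine ⟨coeff 0 h, fun hc => hh0 (by rw [hC, hc, map_zero]), ?_⟩
  rw [smul_eq_C_mul]
  conv_lhs => rw [hC]
  ring

end Aux3

theorem VA.isHomog {F : Type*} [Field F] {n : ℕ} {f : MvPolynomial (Fin n) F}
    (hf : IsHomLin f) : f.IsHomogeneous 1 := by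
  obtain ⟨c, rfl⟩ := hf
  exact IsHomogeneous.sum _ _ _ fun j _ => isHomogeneous_C_mul_X _ _

theorem VA.sub {F : Type*} [Field F] {n : ℕ} {f g : MvPolynomial (Fin n) F}
    (hf : IsHomLin f) (hg : IsHomLin g) : IsHomLin (f - g) := by
  obtain ⟨c, rfl⟩ := hf
  obtain ⟨d, rfl⟩ := hg
  refine ⟨fun j => c j - d j, ?_⟩
  rw [← Finset.sum_sub_distrib]
  exact Finset.sum_congr rfl fun j _ => by rw [map_sub, sub_mul]

theorem VA.prime {F : Type*} [Field F] {n : ℕ} {f : MvPolynomial (Fin n) F}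
    (hf : IsHomLin f) (h0 : f ≠ 0) : Prime f :=
  UniqueFactorizationMonoid.irreducible_iff_prime.mp
    (VA.irreducible_of_homogeneous_one (VA.isHomog hf) h0)

/-- If a product of homogeneous linear forms `ℓ₁ ⋯ ℓ_p` equals
`∏_{i<j} (L_i - L_j)` for linearly independent homogeneous linear forms `L₁,…,Lₙ`,
then `p = n(n-1)/2` and the span of the `ℓᵢ` has dimension `n - 1`. -/
theorem vandermonde_equiv_necessary (F : Type*) [RCLike F] (n p : ℕ) (hn : 2 ≤ n)
    (ℓ : Fin p → MvPolynomial (Fin n) F) (hℓ : ∀ i, IsHomLin (ℓ i))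
    (L : Fin n → MvPolynomial (Fin n) F) (hL : ∀ i, IsHomLin (L i))
    (hind : LinearIndependent F L)
    (heq : ∏ i, ℓ i = ∏ i : Fin n, ∏ j ∈ Finset.Ioi i, (L i - L j)) :
    p = n * (n - 1) / 2 ∧
      Module.finrank F (Submodule.span F (Set.range ℓ)) = n - 1 := by
  obtain ⟨m, rfl⟩ : ∃ m, n = m + 1 := ⟨n - 1, by omega⟩
  have hLne : ∀ i j : Fin (m + 1), i ≠ j → L i - L j ≠ 0 := fun i j hij =>
    sub_ne_zero.mpr fun h => hij (hind.injective h)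
  have hRne : (∏ i : Fin (m + 1), ∏ j ∈ Finset.Ioi i, (L i - L j)) ≠ 0 := by
    rw [Finset.prod_ne_zero_iff]
    intro i _
    rw [Finset.prod_ne_zero_iff]
    intro j hj
    exact hLne i j (Finset.mem_Ioi.mp hj).ne
  have hLne' : (∏ i, ℓ i) ≠ 0 := heq ▸ hRne
  have hlne : ∀ i, ℓ i ≠ 0 := fun i h => hLne' (Finset.prod_eq_zero (Finset.mem_univ i) h)
  -- degree count
  have hLHS : (∏ i, ℓ i).IsHomogeneous p := by
    have h := IsHomogeneous.prod Finset.univ ℓ (fun _ => 1) (fun i _ => VA.isHomog (hℓ i))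
    simpa using h
  have hRHS : (∏ i : Fin (m + 1), ∏ j ∈ Finset.Ioi i, (L i - L j)).IsHomogeneous
      (∑ i : Fin (m + 1), (Finset.Ioi i).card) := by
    refine IsHomogeneous.prod _ _ _ fun i _ => ?_
    have h := IsHomogeneous.prod (Finset.Ioi i) (fun j => L i - L j) (fun _ => 1)
      (fun j _ => VA.isHomog (VA.sub (hL i) (hL j)))
    simpa using h
  have hpD : p = ∑ i : Fin (m + 1), (Finset.Ioi i).card :=
    IsHomogeneous.inj_right (heq ▸ hLHS) hRHS hRne
  have hDval : (∑ i : Fin (m + 1), (Finset.Ioi i).card) = (m + 1) * m / 2 := by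
    have h1 : ∀ i : Fin (m + 1), (Finset.Ioi i).card = m - (i : ℕ) := fun i => by
      rw [Fin.card_Ioi]; omega
    simp only [h1]
    rw [Fin.sum_univ_eq_sum_range (fun k => m - k)]
    have h2 : ∀ k ∈ Finset.range (m + 1), m - k = (m + 1) - 1 - k := fun k _ => by omega
    rw [Finset.sum_congr rfl h2, Finset.sum_range_reflect (fun j => j) (m + 1),
      Finset.sum_range_id]
    simp
  -- primes
  have hprime : ∀ f : MvPolynomial (Fin (m + 1)) F, IsHomLin f → f ≠ 0 → Prime f :=
    fun f h1 h0 => VA.prime h1 h0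
  -- span equality
  set T := Submodule.span F
    {g : MvPolynomial (Fin (m + 1)) F | ∃ i j : Fin (m + 1), i < j ∧ g = L i - L j} with hT
  have hsub1 : Submodule.span F (Set.range ℓ) ≤ T := by
    rw [Submodule.span_le]
    rintro _ ⟨k, rfl⟩
    have hdvd : ℓ k ∣ ∏ i : Fin (m + 1), ∏ j ∈ Finset.Ioi i, (L i - L j) := by
      rw [← heq]
      exact Finset.dvd_prod_of_mem _ (Finset.mem_univ k)
    obtain ⟨i, -, hi⟩ := (hprime _ (hℓ k) (hlne k)).exists_mem_finset_dvd hdvd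
    obtain ⟨j, hj, hij⟩ := (hprime _ (hℓ k) (hlne k)).exists_mem_finset_dvd hi
    have hjlt := Finset.mem_Ioi.mp hj
    obtain ⟨a, ha0, hae⟩ := VA.eq_smul_of_dvd (VA.isHomog (hℓ k))
      (VA.isHomog (VA.sub (hL i) (hL j))) (hlne k) (hLne i j hjlt.ne) hij
    have hmem : L i - L j ∈ T := Submodule.subset_span ⟨i, j, hjlt, rfl⟩
    have hk : ℓ k = a⁻¹ • (L i - L j) := by
      rw [hae, smul_smul, inv_mul_cancel₀ ha0, one_smul]
    rw [hk]
    exact Submodule.smul_mem _ _ hmem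
  have hsub2 : T ≤ Submodule.span F (Set.range ℓ) := by
    rw [hT, Submodule.span_le]
    rintro _ ⟨i, j, hij, rfl⟩
    have hdvd : (L i - L j) ∣ ∏ k, ℓ k := by
      rw [heq]
      have hd1 : (L i - L j) ∣ ∏ j' ∈ Finset.Ioi i, (L i - L j') :=
        Finset.dvd_prod_of_mem (fun j' => L i - L j') (Finset.mem_Ioi.mpr hij)
      exact hd1.trans (Finset.dvd_prod_of_mem
        (fun i' => ∏ j' ∈ Finset.Ioi i', (L i' - L j')) (Finset.mem_univ i))
    obtain ⟨k, -, hk⟩ :=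
      (hprime _ (VA.sub (hL i) (hL j)) (hLne i j hij.ne)).exists_mem_finset_dvd hdvd
    obtain ⟨a, ha0, hae⟩ := VA.eq_smul_of_dvd (VA.isHomog (VA.sub (hL i) (hL j)))
      (VA.isHomog (hℓ k)) (hLne i j hij.ne) (hlne k) hk
    have hij' : L i - L j = a⁻¹ • ℓ k := by
      rw [hae, smul_smul, inv_mul_cancel₀ ha0, one_smul]
    rw [hij']
    exact Submodule.smul_mem _ _ (Submodule.subset_span ⟨k, rfl⟩)
  -- dimension
  set N : Fin m → MvPolynomial (Fin (m + 1)) F :=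
    fun i => L i.castSucc - L (Fin.last m) with hN
  have hNind : LinearIndependent F N := by
    rw [Fintype.linearIndependent_iff]
    intro g hg
    set G : Fin (m + 1) → F := fun j => Fin.lastCases (-∑ i, g i) g j with hG
    have hsum : ∑ j, G j • L j = 0 := by
      rw [Fin.sum_univ_castSucc]
      simp only [hG, Fin.lastCases_castSucc, Fin.lastCases_last]
      rw [neg_smul, ← sub_eq_add_neg, Finset.sum_smul]
      simpa [hN, smul_sub, Finset.sum_sub_distrib] using hg
    have hz := Fintype.linearIndependent_iff.mp hind G hsum
    intro i
    have h := hz i.castSucc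
    simpa [hG, Fin.lastCases_castSucc] using h
  have hTN : T = Submodule.span F (Set.range N) := by
    apply le_antisymm
    · rw [hT, Submodule.span_le]
      rintro _ ⟨i, j, hij, rfl⟩
      by_cases hj : j = Fin.last m
      · subst hj
        have hi : i ≠ Fin.last m := hij.ne
        have h : L i - L (Fin.last m) = N (i.castPred hi) := by
          rw [hN]
          simp [Fin.castSucc_castPred]
        rw [h]
        exact Submodule.subset_span ⟨_, rfl⟩
      · have hi : i ≠ Fin.last m := ((lt_of_lt_of_le hij (Fin.le_last j)).ne)
        have h : L i - L j = N (i.castPred hi) - N (j.castPred hj) := by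
          rw [hN]
          simp only [Fin.castSucc_castPred]
          abel
        rw [h]
        exact Submodule.sub_mem _ (Submodule.subset_span ⟨_, rfl⟩)
          (Submodule.subset_span ⟨_, rfl⟩)
    · rw [Submodule.span_le]
      rintro _ ⟨i, rfl⟩
      exact Submodule.subset_span ⟨i.castSucc, Fin.last m, Fin.castSucc_lt_last i, rfl⟩
  constructor
  · rw [hpD, hDval]
    simp
  · rw [le_antisymm hsub1 hsub2, hTN, finrank_span_eq_card hNind]
    simp
end

section
/- Let F be ℝ or ℂ, let n ≥ 2, and let f ∈ F[x_1,…,x_n]. Then f is linearly equivalent to the Vandermonde polynomial VD_n (i.e., f = ∏_{1 ≤ i < j ≤ n}(L'_i − L'_j) for some linearly independent homogeneous linear forms L'_1,…,L'_n in F[x_1,…,x_n]) if and only if there exist linearly independent homogeneous linear forms L_1, …, L_{n−1} in F[x_1,…,x_n] such that f = (∏_{i=1}^{n−1} L_i) · ∏_{1 ≤ i < j ≤ n−1}(L_i − L_j). -/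
open MvPolynomial

section helpers

variable {M : Type*} [CommMonoid M]

theorem Ioi_castSucc' {m : ℕ} (i : Fin m) :
    Finset.Ioi (i.castSucc) = insert (Fin.last m) ((Finset.Ioi i).map Fin.castSuccEmb) := by
  ext j
  induction j using Fin.lastCases with
  | last => simp [Fin.castSucc_lt_last, Fin.exists_castSucc_eq]
  | cast k =>
    simp only [Finset.mem_Ioi, Finset.mem_insert, Finset.mem_map, Fin.castSuccEmb]
    constructor
    · intro h
      exact Or.inr ⟨k, by simpa using h, rfl⟩
    · rintro (h | ⟨l, hl, hlk⟩)
      · exact absurd h (Fin.castSucc_lt_last k).ne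
      · have : l = k := Fin.ext (by simpa using congrArg Fin.val hlk)
        subst this
        simpa using hl

theorem prod_Ioi_castSucc' {m : ℕ} (i : Fin m) (h : Fin (m + 1) → M) :
    ∏ j ∈ Finset.Ioi i.castSucc, h j =
      h (Fin.last m) * ∏ j ∈ Finset.Ioi i, h j.castSucc := by
  rw [Ioi_castSucc', Finset.prod_insert, Finset.prod_map]
  · rfl
  · simp only [Finset.mem_map]
    rintro ⟨l, _, hl⟩
    exact (Fin.castSucc_lt_last l).ne (by exact hl)

theorem key {A : Type*} [CommRing A] {m : ℕ} (v : Fin (m + 1) → A) :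
    ∏ i : Fin (m + 1), ∏ j ∈ Finset.Ioi i, (v i - v j) =
      (∏ i : Fin m, (v i.castSucc - v (Fin.last m))) *
        ∏ i : Fin m, ∏ j ∈ Finset.Ioi i, (v i.castSucc - v j.castSucc) := by
  rw [Fin.prod_univ_castSucc]
  have hlast : (Finset.Ioi (Fin.last m)) = ∅ := by
    ext j; simp [Fin.le_last j]
  rw [hlast, Finset.prod_empty, mul_one, ← Finset.prod_mul_distrib]
  refine Finset.prod_congr rfl fun i _ => ?_
  rw [prod_Ioi_castSucc']

end helpers

section main

variable {F : Type*} [Field F] {n : ℕ}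

/-- The linear map sending coefficients to a homogeneous linear form. -/
noncomputable def homLinMap (F : Type*) [Field F] (n : ℕ) :
    (Fin n → F) →ₗ[F] MvPolynomial (Fin n) F where
  toFun c := ∑ j, C (c j) * X j
  map_add' c d := by simp [add_mul, Finset.sum_add_distrib]
  map_smul' a c := by
    simp [Finset.smul_sum, smul_eq_C_mul, C_mul, mul_assoc]

theorem homLinMap_injective (F : Type*) [Field F] (n : ℕ) :
    Function.Injective (homLinMap F n) := by
  intro c d h
  funext j
  have := congrArg (MvPolynomial.coeff (Finsupp.single j 1)) h
  simpa [homLinMap, MvPolynomial.coeff_sum, coeff_C_mul, coeff_X',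
    Finsupp.single_left_inj (one_ne_zero (α := ℕ)), Finset.sum_ite_eq'] using this

@[simp] theorem homLinMap_apply (c : Fin n → F) :
    homLinMap F n c = ∑ j, C (c j) * X j := rfl

theorem isHomLin_iff {f : MvPolynomial (Fin n) F} :
    IsHomLin f ↔ ∃ c, f = homLinMap F n c := Iff.rfl

end main


/-- `f` is linearly equivalent to the Vandermonde polynomial `VD_n` iff
`f = (∏_{i=1}^{n-1} L_i) · ∏_{1 ≤ i < j ≤ n-1}(L_i - L_j)` for some linearly
independent homogeneous linear forms `L₁, …, L_{n-1}`. -/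
theorem vandermonde_equiv_characterization (F : Type*) [RCLike F] (n : ℕ) (hn : 2 ≤ n)
    (f : MvPolynomial (Fin n) F) :
    (∃ L' : Fin n → MvPolynomial (Fin n) F, (∀ i, IsHomLin (L' i)) ∧
        LinearIndependent F L' ∧
        f = ∏ i : Fin n, ∏ j ∈ Finset.Ioi i, (L' i - L' j)) ↔
      (∃ L : Fin (n - 1) → MvPolynomial (Fin n) F, (∀ i, IsHomLin (L i)) ∧
        LinearIndependent F L ∧
        f = (∏ i, L i) * ∏ i : Fin (n - 1), ∏ j ∈ Finset.Ioi i, (L i - L j)) := by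
  obtain ⟨m, rfl⟩ : ∃ m, n = m + 1 := ⟨n - 1, by omega⟩
  show (∃ L' : Fin (m + 1) → MvPolynomial (Fin (m + 1)) F, (∀ i, IsHomLin (L' i)) ∧
        LinearIndependent F L' ∧
        f = ∏ i : Fin (m + 1), ∏ j ∈ Finset.Ioi i, (L' i - L' j)) ↔
      (∃ L : Fin m → MvPolynomial (Fin (m + 1)) F, (∀ i, IsHomLin (L i)) ∧
        LinearIndependent F L ∧
        f = (∏ i, L i) * ∏ i : Fin m, ∏ j ∈ Finset.Ioi i, (L i - L j))
  set φ := homLinMap F (m + 1) with hφdef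
  have hφinj : Function.Injective φ := homLinMap_injective F (m + 1)
  constructor
  · rintro ⟨L', hhom, hli, rfl⟩
    choose c hc using fun i => (isHomLin_iff.mp (hhom i))
    refine ⟨fun i => L' i.castSucc - L' (Fin.last m),
      fun i => isHomLin_iff.mpr ⟨c i.castSucc - c (Fin.last m), by
        show L' i.castSucc - L' (Fin.last m) = _
        rw [hc, hc, ← map_sub]⟩,
      ?_, by simpa using key L'⟩
    rw [Fintype.linearIndependent_iff]
    intro g hg
    have h0 : ∑ j : Fin (m + 1), (Fin.snoc g (-(∑ i, g i)) : Fin (m + 1) → F) j • L' j = 0 := by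
      rw [Fin.sum_univ_castSucc]
      simp only [Fin.snoc_castSucc, Fin.snoc_last, neg_smul, Finset.sum_smul]
      rw [← sub_eq_add_neg, sub_eq_zero]
      simp only [smul_sub, Finset.sum_sub_distrib] at hg
      rw [sub_eq_zero] at hg
      exact hg
    intro i
    have := Fintype.linearIndependent_iff.mp hli _ h0 i.castSucc
    simpa using this
  · rintro ⟨L, hhom, hli, rfl⟩
    choose c hc using fun i => (isHomLin_iff.mp (hhom i))
    have hLc : ∀ i, L i = φ (c i) := hc
    have hlic : LinearIndependent F c := by
      have : LinearIndependent F (φ ∘ c) := by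
        convert hli using 1; funext i; exact (hLc i).symm
      exact LinearIndependent.of_comp φ this
    obtain ⟨cM, hcM⟩ : ∃ x, x ∉ Submodule.span F (Set.range c) := by
      by_contra h
      push_neg at h
      have htop : Submodule.span F (Set.range c) = ⊤ := Submodule.eq_top_iff'.mpr h
      let b := Module.Basis.mk hlic (le_of_eq htop.symm)
      have h1 := Module.finrank_eq_card_basis b
      rw [Module.finrank_fin_fun] at h1
      simp at h1
    set e : Fin (m + 1) → (Fin (m + 1) → F) := Fin.snoc (fun i => c i + cM) cM with he
    have hlie : LinearIndependent F e := by
      rw [Fintype.linearIndependent_iff]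
      intro g hg
      rw [Fin.sum_univ_castSucc] at hg
      simp only [he, Fin.snoc_castSucc, Fin.snoc_last, smul_add, Finset.sum_add_distrib] at hg
      have hg' : (∑ i : Fin m, g i.castSucc • c i) +
          ((∑ i : Fin m, g i.castSucc) + g (Fin.last m)) • cM = 0 := by
        rw [add_smul, Finset.sum_smul, ← add_assoc]
        exact hg
      set s : F := (∑ i : Fin m, g i.castSucc) + g (Fin.last m) with hsdef
      have hs : s = 0 := by
        by_contra hs
        apply hcM
        have h2 : s • cM = -(∑ i : Fin m, g i.castSucc • c i) := by
          exact eq_neg_of_add_eq_zero_right hg'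
        have hcm : cM = (-(s⁻¹)) • ∑ i : Fin m, g i.castSucc • c i := by
          calc cM = s⁻¹ • (s • cM) := by rw [smul_smul, inv_mul_cancel₀ hs, one_smul]
          _ = (-(s⁻¹)) • ∑ i : Fin m, g i.castSucc • c i := by rw [h2, smul_neg, neg_smul]
        rw [hcm]
        exact Submodule.smul_mem _ _ (Submodule.sum_mem _ fun i _ =>
          Submodule.smul_mem _ _ (Submodule.subset_span ⟨i, rfl⟩))
      rw [hs, zero_smul, add_zero] at hg'
      have hz := Fintype.linearIndependent_iff.mp hlic _ hg'
      intro j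
      induction j using Fin.lastCases with
      | last =>
        have h3 : (∑ i : Fin m, g i.castSucc) = 0 := by
          simp [hz]
        simpa [hsdef, h3] using hs
      | cast k => exact hz k
    refine ⟨fun j => φ (e j), fun j => isHomLin_iff.mpr ⟨e j, rfl⟩,
      hlie.map' φ (LinearMap.ker_eq_bot.mpr hφinj), ?_⟩
    rw [key (fun j => φ (e j))]
    congr 1
    · refine Finset.prod_congr rfl fun i _ => ?_
      rw [← map_sub, hLc i]
      congr 1
      simp [he]
    · refine Finset.prod_congr rfl fun i _ => Finset.prod_congr rfl fun j _ => ?_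
      rw [← map_sub, hLc i, hLc j, ← map_sub]
      congr 1
      simp [he]
end

section
/- Over F = ℝ (or ℂ), the polynomial (x_1 − y_1)(x_2 − y_2) ∈ F[x_1,x_2,y_1,y_2] does not belong to VD_aff: there is no m ≥ 1 and no affine linear forms ℓ_1, …, ℓ_m ∈ F[x_1,x_2,y_1,y_2] such that (x_1 − y_1)(x_2 − y_2) = ∏_{1 ≤ i < j ≤ m} (ℓ_i − ℓ_j). -/
open MvPolynomial


lemma two_mul_eq_zero {F : Type*} [Field F] [CharZero F] {x : F} (h : (2:F) * x = 0) : x = 0 := by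
  rcases mul_eq_zero.1 h with h' | h'
  · exact absurd h' two_ne_zero
  · exact h'

lemma exists_pts {F : Type*} [Field F] [CharZero F] (w : Fin 4 → F) :
    ∃ P Q : Fin 4 → F, (∑ k, w k * P k) = (∑ k, w k * Q k) ∧
      (P 0 - P 2) * (P 1 - P 3) ≠ (Q 0 - Q 2) * (Q 1 - Q 3) := by
  have hM : ∀ x0 x1 x2 x3 : F, (![x0,x1,x2,x3] 0 = x0) ∧ (![x0,x1,x2,x3] 1 = x1)
      ∧ (![x0,x1,x2,x3] 2 = x2) ∧ (![x0,x1,x2,x3] 3 = x3) :=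
    fun x0 x1 x2 x3 => ⟨rfl, rfl, rfl, rfl⟩
  by_cases hA : w 0 - w 2 = 0
  · refine ⟨![1,1,0,0], ![0,1,1,0], ?_, ?_⟩
    · rw [Fin.sum_univ_four, Fin.sum_univ_four,
        (hM (1:F) 1 0 0).1, (hM (1:F) 1 0 0).2.1, (hM (1:F) 1 0 0).2.2.1,
        (hM (1:F) 1 0 0).2.2.2, (hM (0:F) 1 1 0).1, (hM (0:F) 1 1 0).2.1,
        (hM (0:F) 1 1 0).2.2.1, (hM (0:F) 1 1 0).2.2.2]
      linear_combination hA
    · rw [(hM (1:F) 1 0 0).1, (hM (1:F) 1 0 0).2.1, (hM (1:F) 1 0 0).2.2.1,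
        (hM (1:F) 1 0 0).2.2.2, (hM (0:F) 1 1 0).1, (hM (0:F) 1 1 0).2.1,
        (hM (0:F) 1 1 0).2.2.1, (hM (0:F) 1 1 0).2.2.2]
      intro h
      norm_num at h
  · by_cases hB : w 1 - w 3 = 0
    · refine ⟨![1,1,0,0], ![1,0,0,1], ?_, ?_⟩
      · rw [Fin.sum_univ_four, Fin.sum_univ_four,
          (hM (1:F) 1 0 0).1, (hM (1:F) 1 0 0).2.1, (hM (1:F) 1 0 0).2.2.1,
          (hM (1:F) 1 0 0).2.2.2, (hM (1:F) 0 0 1).1, (hM (1:F) 0 0 1).2.1,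
          (hM (1:F) 0 0 1).2.2.1, (hM (1:F) 0 0 1).2.2.2]
        linear_combination hB
      · rw [(hM (1:F) 1 0 0).1, (hM (1:F) 1 0 0).2.1, (hM (1:F) 1 0 0).2.2.1,
          (hM (1:F) 1 0 0).2.2.2, (hM (1:F) 0 0 1).1, (hM (1:F) 0 0 1).2.1,
          (hM (1:F) 0 0 1).2.2.1, (hM (1:F) 0 0 1).2.2.2]
        intro h
        norm_num at h
    · set A := w 0 - w 2 with hA'
      set B := w 1 - w 3 with hB'
      refine ⟨![B, -A, -B, A], 0, ?_, ?_⟩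
      · rw [Fin.sum_univ_four, Fin.sum_univ_four,
          (hM B (-A) (-B) A).1, (hM B (-A) (-B) A).2.1, (hM B (-A) (-B) A).2.2.1,
          (hM B (-A) (-B) A).2.2.2]
        simp only [Pi.zero_apply, mul_zero]
        rw [hA', hB']; ring
      · rw [(hM B (-A) (-B) A).1, (hM B (-A) (-B) A).2.1, (hM B (-A) (-B) A).2.2.1,
          (hM B (-A) (-B) A).2.2.2]
        simp only [Pi.zero_apply, sub_zero, sub_self, mul_zero]
        intro h
        have h' : (B - -B) * (-A - A) = 0 := by linear_combination h
        rcases mul_eq_zero.1 h' with h'' | h''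
        · exact hB (two_mul_eq_zero (by linear_combination h''))
        · exact hA (two_mul_eq_zero (by linear_combination -h''))

/-- An affine linear form `d + c₁x₁ + ⋯ + cₙxₙ` (a polynomial of degree at most 1). -/
def IsAffLin {F : Type*} [Field F] {n : ℕ} (f : MvPolynomial (Fin n) F) : Prop :=
  ∃ (c : Fin n → F) (d : F), f = C d + ∑ j, C (c j) * X j

set_option maxHeartbeats 1000000 in
/-- With variables `x₁ = X 0, x₂ = X 1, y₁ = X 2, y₂ = X 3`, the polynomial
`(x₁ - y₁)(x₂ - y₂)` is not an affine projection of any Vandermonde polynomial. -/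
theorem product_not_in_VD_aff (F : Type*) [RCLike F] :
    ¬ ∃ (m : ℕ) (_ : 1 ≤ m) (ℓ : Fin m → MvPolynomial (Fin 4) F),
      (∀ i, IsAffLin (ℓ i)) ∧
      (X 0 - X 2) * (X 1 - X 3) = ∏ i : Fin m, ∏ j ∈ Finset.Ioi i, (ℓ i - ℓ j) := by
  rintro ⟨m, hm, ℓ, hlin, heq⟩
  choose c d hcd using hlin
  classical
  set PP : Finset ((_ : Fin m) × Fin m) := Finset.univ.sigma fun i => Finset.Ioi i with hPP
  have heq' : (X 0 - X 2) * (X 1 - X 3) = ∏ p ∈ PP, (ℓ p.1 - ℓ p.2) := by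
    rw [heq, hPP, Finset.prod_sigma]
  have aff_sub : ∀ i j : Fin m, ℓ i - ℓ j
      = C (d i - d j) + ∑ k, C (c i k - c j k) * X k := by
    intro i j
    rw [hcd i, hcd j]
    simp only [map_sub, sub_mul, Finset.sum_sub_distrib]
    ring
  set cd : ((_ : Fin m) × Fin m) → (Fin 4 → F) := fun p k => c p.1 k - c p.2 k with hcddef
  set S : Finset ((_ : Fin m) × Fin m) := PP.filter (fun p => cd p ≠ 0) with hSdef
  -- basic nonvanishing facts
  have heval_ne : ∀ (f : MvPolynomial (Fin 4) F) (z : Fin 4 → F), eval z f ≠ 0 → f ≠ 0 := by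
    intro f z h hf; rw [hf] at h; simp at h
  have hne : ∀ (u : Fin 4 → F), u ≠ 0 → (∑ k, C (u k) * X k : MvPolynomial (Fin 4) F) ≠ 0 := by
    intro u hu
    obtain ⟨k0, hk0⟩ : ∃ k, u k ≠ 0 := by
      by_contra hcon; push_neg at hcon; exact hu (funext hcon)
    refine heval_ne _ (fun j => if j = k0 then 1 else 0) ?_
    rw [map_sum]
    simp only [eval_mul, eval_C, eval_X]
    rw [Finset.sum_eq_single k0]
    · simpa using hk0
    · intro b _ hb; simp [hb]
    · simp
  have hX02 : (X 0 - X 2 : MvPolynomial (Fin 4) F) ≠ 0 := by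
    refine heval_ne _ (fun j => if j = 0 then 1 else 0) ?_
    simp
  have hX13 : (X 1 - X 3 : MvPolynomial (Fin 4) F) ≠ 0 := by
    refine heval_ne _ (fun j => if j = 1 then 1 else 0) ?_
    simp
  -- choose a direction avoiding all hyperplanes
  have hG : ((X 0 - X 2) * (X 1 - X 3) * ∏ p ∈ S, ∑ k, C (cd p k) * X k
      : MvPolynomial (Fin 4) F) ≠ 0 := by
    refine mul_ne_zero (mul_ne_zero hX02 hX13) (Finset.prod_ne_zero_iff.2 ?_)
    intro p hp
    refine hne _ ?_
    rw [hSdef] at hp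
    exact (Finset.mem_filter.1 hp).2
  obtain ⟨v, hv⟩ : ∃ v : Fin 4 → F,
      eval v ((X 0 - X 2) * (X 1 - X 3) * ∏ p ∈ S, ∑ k, C (cd p k) * X k) ≠ 0 := by
    by_contra hcon; push_neg at hcon
    exact hG (MvPolynomial.funext fun x => by simpa using hcon x)
  rw [map_mul, map_mul, map_prod] at hv
  have hv1 : (v 0 - v 2) ≠ 0 := by
    intro h; apply hv; rw [show eval v (X 0 - X 2 : MvPolynomial (Fin 4) F) = v 0 - v 2 by simp, h]; ring
  have hv2 : (v 1 - v 3) ≠ 0 := by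
    intro h; apply hv; rw [show eval v (X 1 - X 3 : MvPolynomial (Fin 4) F) = v 1 - v 3 by simp, h]; ring
  have hv3 : ∀ p ∈ S, (∑ k, cd p k * v k) ≠ 0 := by
    intro p hp h
    apply hv
    have : eval v (∑ k, C (cd p k) * X k) = 0 := by
      rw [map_sum]; simpa using h
    rw [Finset.prod_eq_zero hp this]
    ring
  -- substitute along the line t ↦ (v j * t)
  set φ : MvPolynomial (Fin 4) F →ₐ[F] Polynomial F :=
    aeval (fun t : Fin 4 => Polynomial.C (v t) * Polynomial.X) with hφ
  have hφfac : ∀ i j : Fin m, φ (ℓ i - ℓ j)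
      = Polynomial.C (d i - d j) + Polynomial.C (∑ k, (c i k - c j k) * v k) * Polynomial.X := by
    intro i j
    rw [hφ, aff_sub, map_add, map_sum, aeval_C]
    simp only [map_mul, aeval_C, aeval_X]
    rw [Polynomial.algebraMap_eq, map_sum Polynomial.C _ Finset.univ, Finset.sum_mul]
    congr 1
    apply Finset.sum_congr rfl
    intro k _
    rw [Polynomial.C_mul]; ring
  have hφLHS : φ ((X 0 - X 2) * (X 1 - X 3))
      = (Polynomial.C (v 0 - v 2) * Polynomial.X) * (Polynomial.C (v 1 - v 3) * Polynomial.X) := by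
    rw [hφ]
    simp only [map_mul, map_sub, aeval_X, Polynomial.C_sub]
    ring
  have hPeq : (Polynomial.C (v 0 - v 2) * Polynomial.X) * (Polynomial.C (v 1 - v 3) * Polynomial.X)
      = ∏ p ∈ PP, (Polynomial.C (d p.1 - d p.2)
          + Polynomial.C (∑ k, (c p.1 k - c p.2 k) * v k) * Polynomial.X) := by
    rw [← hφLHS, heq', map_prod]
    exact Finset.prod_congr rfl fun p _ => hφfac p.1 p.2
  have hLHSne : ((Polynomial.C (v 0 - v 2) * Polynomial.X)
      * (Polynomial.C (v 1 - v 3) * Polynomial.X) : Polynomial F) ≠ 0 :=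
    mul_ne_zero (mul_ne_zero (Polynomial.C_ne_zero.2 hv1) Polynomial.X_ne_zero)
      (mul_ne_zero (Polynomial.C_ne_zero.2 hv2) Polynomial.X_ne_zero)
  have hfacne : ∀ p ∈ PP, (Polynomial.C (d p.1 - d p.2)
      + Polynomial.C (∑ k, (c p.1 k - c p.2 k) * v k) * Polynomial.X : Polynomial F) ≠ 0 := by
    intro p hp h0
    apply hLHSne
    rw [hPeq]
    exact Finset.prod_eq_zero hp h0
  have hdeg2 : ((Polynomial.C (v 0 - v 2) * Polynomial.X)
      * (Polynomial.C (v 1 - v 3) * Polynomial.X) : Polynomial F).natDegree = 2 := by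
    rw [Polynomial.natDegree_mul (mul_ne_zero (Polynomial.C_ne_zero.2 hv1) Polynomial.X_ne_zero)
      (mul_ne_zero (Polynomial.C_ne_zero.2 hv2) Polynomial.X_ne_zero),
      Polynomial.natDegree_C_mul_X _ hv1, Polynomial.natDegree_C_mul_X _ hv2]
  have hdegfac : ∀ p ∈ PP, (Polynomial.C (d p.1 - d p.2)
      + Polynomial.C (∑ k, (c p.1 k - c p.2 k) * v k) * Polynomial.X : Polynomial F).natDegree
      = if p ∈ S then 1 else 0 := by
    intro p hp
    by_cases hpS : p ∈ S
    · have hb : (∑ k, (c p.1 k - c p.2 k) * v k) ≠ 0 := hv3 p hpS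
      rw [if_pos hpS, add_comm]
      exact Polynomial.natDegree_linear hb
    · have hcd0 : cd p = 0 := by
        rw [hSdef] at hpS
        by_contra hcon
        exact hpS (Finset.mem_filter.2 ⟨hp, hcon⟩)
      have hb : (∑ k, (c p.1 k - c p.2 k) * v k) = 0 := by
        apply Finset.sum_eq_zero
        intro k _
        have : c p.1 k - c p.2 k = 0 := congrFun hcd0 k
        rw [this, zero_mul]
      rw [if_neg hpS, hb]
      simp
  have hcard : S.card = 2 := by
    have h1 : (2 : ℕ) = ∑ p ∈ PP, if p ∈ S then 1 else 0 := by
      rw [← hdeg2, hPeq, Polynomial.natDegree_prod _ _ hfacne]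
      exact Finset.sum_congr rfl hdegfac
    have h2 : S.card = ∑ p ∈ PP, if p ∈ S then 1 else 0 := by
      rw [← Finset.card_filter]
      congr 1
      rw [hSdef]
      ext p
      simp only [Finset.mem_filter, hSdef]
      tauto
    rw [h2, ← h1]
  obtain ⟨p1, p2, hp12, hSeq⟩ := Finset.card_eq_two.1 hcard
  have hp1S : p1 ∈ S := by rw [hSeq]; simp
  have hp2S : p2 ∈ S := by rw [hSeq]; simp
  have hSmem : ∀ p ∈ S, p ∈ PP ∧ cd p ≠ 0 := by
    intro p hp
    rw [hSdef] at hp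
    exact ⟨(Finset.mem_filter.1 hp).1, (Finset.mem_filter.1 hp).2⟩
  have hltPP : ∀ p ∈ PP, p.1 < p.2 := by
    intro p hp
    rw [hPP] at hp
    exact Finset.mem_Ioi.1 (Finset.mem_sigma.1 hp).2
  have key : ∀ i j : Fin m, i < j → (⟨i, j⟩ : (_ : Fin m) × Fin m) ≠ p1 →
      (⟨i, j⟩ : (_ : Fin m) × Fin m) ≠ p2 → c i = c j := by
    intro i j hij h1 h2
    have hmem : (⟨i, j⟩ : (_ : Fin m) × Fin m) ∈ PP := by
      rw [hPP]
      exact Finset.mem_sigma.2 ⟨Finset.mem_univ i, Finset.mem_Ioi.2 hij⟩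
    have hnotS : (⟨i, j⟩ : (_ : Fin m) × Fin m) ∉ S := by
      rw [hSeq]
      simp only [Finset.mem_insert, Finset.mem_singleton]
      tauto
    have hcd0 : cd ⟨i, j⟩ = 0 := by
      by_contra hcon
      exact hnotS (by rw [hSdef]; exact Finset.mem_filter.2 ⟨hmem, hcon⟩)
    funext k
    have := congrFun hcd0 k
    simp only [hcddef, Pi.zero_apply] at this
    exact sub_eq_zero.1 this
  have key2 : ∀ i j : Fin m, i ≠ j → (⟨i, j⟩ : (_ : Fin m) × Fin m) ≠ p1 →
      (⟨i, j⟩ : (_ : Fin m) × Fin m) ≠ p2 → (⟨j, i⟩ : (_ : Fin m) × Fin m) ≠ p1 →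
      (⟨j, i⟩ : (_ : Fin m) × Fin m) ≠ p2 → c i = c j := by
    intro i j hij h1 h2 h3 h4
    rcases lt_or_gt_of_ne hij with h | h
    · exact key i j h h1 h2
    · exact (key j i h h3 h4).symm
  obtain ⟨a, b⟩ := p1
  obtain ⟨r, s⟩ := p2
  have hab : a < b := (hltPP _ (hSmem _ hp1S).1)
  have hrs : r < s := (hltPP _ (hSmem _ hp2S).1)
  have hcd2 : cd ⟨r, s⟩ ≠ 0 := (hSmem _ hp2S).2
  have mkne : ∀ {i j k l : Fin m}, (i ≠ k ∨ j ≠ l) →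
      (⟨i, j⟩ : (_ : Fin m) × Fin m) ≠ ⟨k, l⟩ := by
    intro i j k l h hEq
    cases hEq
    rcases h with h | h <;> exact h rfl
  have mkne' : ∀ {i j k l : Fin m}, ((i:ℕ) ≠ (k:ℕ) ∨ (j:ℕ) ≠ (l:ℕ)) →
      (⟨i, j⟩ : (_ : Fin m) × Fin m) ≠ ⟨k, l⟩ := by
    intro i j k l h hEq
    cases hEq
    rcases h with h | h <;> exact h rfl
  have hab' : (a:ℕ) < (b:ℕ) := hab
  have hrs' : (r:ℕ) < (s:ℕ) := hrs
  have hsign : (∀ k, c r k - c s k = c a k - c b k) ∨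
      (∀ k, c r k - c s k = -(c a k - c b k)) := by
    by_cases har : a = r
    · have har' : (a:ℕ) = (r:ℕ) := congrArg Fin.val har
      have hbs : b ≠ s := fun hbseq => hp12 (by rw [har, hbseq])
      have hbs' : (b:ℕ) ≠ (s:ℕ) := fun h => hbs (Fin.val_injective h)
      have hcbs : c b = c s := by
        apply key2 b s hbs <;> exact mkne' (by omega)
      left
      intro k
      rw [← har, hcbs]
    · have har' : (a:ℕ) ≠ (r:ℕ) := fun h => har (Fin.val_injective h)
      by_cases hbs : b = s
      · have hbs' : (b:ℕ) = (s:ℕ) := congrArg Fin.val hbs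
        have hcar : c a = c r := by
          apply key2 a r har <;> exact mkne' (by omega)
        left
        intro k
        rw [← hbs, hcar]
      · have hbs' : (b:ℕ) ≠ (s:ℕ) := fun h => hbs (Fin.val_injective h)
        by_cases has : a = s
        · have has' : (a:ℕ) = (s:ℕ) := congrArg Fin.val has
          have hcrb : c r = c b := by
            apply key2 r b (Fin.ne_of_val_ne (by omega)) <;> exact mkne' (by omega)
          right
          intro k
          rw [hcrb, ← has]
          ring
        · have has' : (a:ℕ) ≠ (s:ℕ) := fun h => has (Fin.val_injective h)
          by_cases hbr : b = r
          · have hbr' : (b:ℕ) = (r:ℕ) := congrArg Fin.val hbr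
            have hcas : c a = c s := by
              apply key2 a s has <;> exact mkne' (by omega)
            right
            intro k
            rw [← hbr, hcas]
            ring
          · have hbr' : (b:ℕ) ≠ (r:ℕ) := fun h => hbr (Fin.val_injective h)
            have hcar : c a = c r := by
              apply key2 a r har <;> exact mkne' (by omega)
            have hcas : c a = c s := by
              apply key2 a s has <;> exact mkne' (by omega)
            exfalso
            apply hcd2
            funext k
            simp only [hcddef, Pi.zero_apply]
            rw [← hcar, ← hcas]
            ring
  -- final evaluation argument
  obtain ⟨P, Q, hPQ, hneq⟩ := exists_pts (fun k => c a k - c b k)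
  apply hneq
  have e1 := congrArg (eval P) heq'
  have e2 := congrArg (eval Q) heq'
  rw [map_prod] at e1 e2
  simp only [eval_mul, eval_sub, eval_X] at e1 e2
  have hRHS : ∏ p ∈ PP, eval P (ℓ p.1 - ℓ p.2) = ∏ p ∈ PP, eval Q (ℓ p.1 - ℓ p.2) := by
    apply Finset.prod_congr rfl
    intro p hp
    rw [aff_sub p.1 p.2]
    simp only [map_add, map_sum, eval_C, eval_mul, eval_X]
    congr 1
    by_cases h1 : p = (⟨a, b⟩ : (_ : Fin m) × Fin m)
    · rw [h1]
      exact hPQ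
    · by_cases h2 : p = (⟨r, s⟩ : (_ : Fin m) × Fin m)
      · rw [h2]
        rcases hsign with hs | hs
        · calc ∑ k, (c r k - c s k) * P k = ∑ k, (c a k - c b k) * P k := by
                apply Finset.sum_congr rfl; intro k _; rw [hs k]
            _ = ∑ k, (c a k - c b k) * Q k := hPQ
            _ = ∑ k, (c r k - c s k) * Q k := by
                apply Finset.sum_congr rfl; intro k _; rw [hs k]
        · calc ∑ k, (c r k - c s k) * P k = -∑ k, (c a k - c b k) * P k := by
                rw [← Finset.sum_neg_distrib]
                apply Finset.sum_congr rfl; intro k _; rw [hs k]; ring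
            _ = -∑ k, (c a k - c b k) * Q k := by rw [hPQ]
            _ = ∑ k, (c r k - c s k) * Q k := by
                rw [← Finset.sum_neg_distrib]
                apply Finset.sum_congr rfl; intro k _; rw [hs k]; ring
      · have hpS : p ∉ S := by
          rw [hSeq]
          simp only [Finset.mem_insert, Finset.mem_singleton]
          tauto
        have hcd0 : cd p = 0 := by
          by_contra hcon
          exact hpS (by rw [hSdef]; exact Finset.mem_filter.2 ⟨hp, hcon⟩)
        have hz : ∀ z : Fin 4 → F, ∑ k, (c p.1 k - c p.2 k) * z k = 0 := by
          intro z
          apply Finset.sum_eq_zero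
          intro k _
          have := congrFun hcd0 k
          simp only [hcddef, Pi.zero_apply] at this
          rw [this, zero_mul]
        rw [hz P, hz Q]
  simp only [map_sub] at hRHS
  rw [e1, e2]
  exact hRHS
end

section
/- Over F = ℝ (or ℂ), the polynomial f = (x_1 − y_1) + (x_2 − y_2) ∈ F[x_1,x_2,y_1,y_2] belongs to VD_homo (indeed f = L_1 − L_2 = VD_2(L_1,L_2) for the homogeneous linear forms L_1 = x_1 + x_2 and L_2 = y_1 + y_2), but f does not belong to VD_proj: there is no m ≥ 1 and no ρ_1, …, ρ_m, each of which is either one of the variables x_1, x_2, y_1, y_2 or a constant from F, such that f = ∏_{1 ≤ i < j ≤ m}(ρ_i − ρ_j). -/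
open MvPolynomial

/-- Either a variable or a constant: the allowed entries in simple projections. -/
def IsVarOrConst {F : Type*} [Field F] {n : ℕ} (ρ : MvPolynomial (Fin n) F) : Prop :=
  (∃ j, ρ = X j) ∨ (∃ c : F, ρ = C c)

lemma key_ne (F : Type*) [RCLike F] (a b : Fin 4) :
    (Function.update (![1, 2, 4, 8] : Fin 4 → F) a ((![1, 2, 4, 8] : Fin 4 → F) b)) 0
      - (Function.update (![1, 2, 4, 8] : Fin 4 → F) a ((![1, 2, 4, 8] : Fin 4 → F) b)) 2
      + ((Function.update (![1, 2, 4, 8] : Fin 4 → F) a ((![1, 2, 4, 8] : Fin 4 → F) b)) 1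
      - (Function.update (![1, 2, 4, 8] : Fin 4 → F) a ((![1, 2, 4, 8] : Fin 4 → F) b)) 3) ≠ 0 := by
  fin_cases a <;> fin_cases b <;> simp [Function.update] <;> norm_num

/-- With variables `x₁ = X 0, x₂ = X 1, y₁ = X 2, y₂ = X 3`: the polynomial
`(x₁ - y₁) + (x₂ - y₂)` is a homogeneous projection of a Vandermonde polynomial
(it is in `VD_homo`), but it is not a simple projection (not in `VD_proj`). -/
theorem sum_in_VD_homo_not_in_VD_proj (F : Type*) [RCLike F] :
    (∃ (m : ℕ) (_ : 1 ≤ m) (ℓ : Fin m → MvPolynomial (Fin 4) F),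
      (∀ i, IsHomLin (ℓ i)) ∧
      (X 0 - X 2) + (X 1 - X 3) = ∏ i : Fin m, ∏ j ∈ Finset.Ioi i, (ℓ i - ℓ j)) ∧
    ¬ (∃ (m : ℕ) (_ : 1 ≤ m) (ρ : Fin m → MvPolynomial (Fin 4) F),
      (∀ i, IsVarOrConst (ρ i)) ∧
      (X 0 - X 2) + (X 1 - X 3) = ∏ i : Fin m, ∏ j ∈ Finset.Ioi i, (ρ i - ρ j)) := by
  constructor
  · refine ⟨2, by norm_num, ![X 0 + X 1, X 2 + X 3], ?_, ?_⟩
    · intro i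
      fin_cases i
      · exact ⟨![1, 1, 0, 0], by simp [Fin.sum_univ_four]⟩
      · exact ⟨![0, 0, 1, 1], by simp [Fin.sum_univ_four]⟩
    · have h0 : Finset.Ioi (0 : Fin 2) = {1} := by decide
      have h1 : Finset.Ioi (1 : Fin 2) = ∅ := by decide
      rw [Fin.prod_univ_two, h0, h1]
      simp
      ring
  · rintro ⟨m, hm, ρ, hρ, heq⟩
    -- map everything to Polynomial F by sending all variables to X
    set φ : MvPolynomial (Fin 4) F →ₐ[F] Polynomial F := aeval (fun _ => Polynomial.X)
    have hφf : φ ((X 0 - X 2) + (X 1 - X 3) : MvPolynomial (Fin 4) F) = 0 := by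
      simp [φ]
    have hprod : (∏ i : Fin m, ∏ j ∈ Finset.Ioi i, (φ (ρ i) - φ (ρ j))) = 0 := by
      rw [← hφf, heq]; simp [map_prod, map_sub]
    obtain ⟨i, -, hi⟩ := Finset.prod_eq_zero_iff.mp hprod
    obtain ⟨j, hj, hij⟩ := Finset.prod_eq_zero_iff.mp hi
    have hij' : φ (ρ i) = φ (ρ j) := by linear_combination hij
    have hfne : ((X 0 - X 2) + (X 1 - X 3) : MvPolynomial (Fin 4) F) ≠ 0 := by
      intro h
      have := congrArg (eval ![1, 0, 0, 0]) h
      simp at this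
    rcases hρ i with ⟨a, ha⟩ | ⟨c, hc⟩
    · rcases hρ j with ⟨b, hb⟩ | ⟨d, hd⟩
      · -- both variables: evaluate at p = update w a (w b)
        set w : Fin 4 → F := ![1, 2, 4, 8]
        set p : Fin 4 → F := Function.update w a (w b) with hp
        have hpe : eval p ((X 0 - X 2) + (X 1 - X 3) : MvPolynomial (Fin 4) F) = 0 := by
          rw [heq]
          rw [map_prod]
          apply Finset.prod_eq_zero (Finset.mem_univ i)
          rw [map_prod]
          apply Finset.prod_eq_zero hj
          rw [ha, hb]
          simp only [map_sub, eval_X]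
          have h1 : p a = w b := by simp [hp]
          have h2 : p b = w b := by
            by_cases hab : b = a
            · subst hab; simp [hp]
            · simp [hp, Function.update_of_ne hab]
          rw [h1, h2, sub_self]
        have : p 0 - p 2 + (p 1 - p 3) = 0 := by
          simpa using hpe
        exact key_ne F a b this
      · exfalso
        rw [ha, hd] at hij'
        simp [φ] at hij'
        exact Polynomial.X_ne_C d hij'
    · rcases hρ j with ⟨b, hb⟩ | ⟨d, hd⟩
      · exfalso
        rw [hc, hb] at hij'
        simp [φ] at hij'
        exact Polynomial.X_ne_C c hij'.symm
      · rw [hc, hd] at hij'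
        simp [φ, Polynomial.C_inj] at hij'
        have hzero : ρ i - ρ j = 0 := by rw [hc, hd, hij', sub_self]
        apply hfne
        rw [heq]
        apply Finset.prod_eq_zero (Finset.mem_univ i)
        exact Finset.prod_eq_zero hj hzero
end

section
/- Over F = ℝ (or ℂ), the product (x_1 − y_1)(x_2 − y_2) is not a finite F-linear combination of Vandermonde polynomials: there do not exist s ≥ 1, natural numbers n_1,…,n_s ≥ 1, and scalars α_1,…,α_s ∈ F such that (x_1 − y_1)(x_2 − y_2) = Σ_{i=1}^s α_i · VD_{n_i}(z_1,…,z_{n_i}) where z_1, z_2, … is any enumeration of the ambient variables and VD_{n_i}(z_1,…,z_{n_i}) = ∏_{1 ≤ a < b ≤ n_i}(z_a − z_b). Consequently the class Σ·VD, which contains the linear forms x_1 − y_1 and x_2 − y_2, is not closed under multiplication. -/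
open MvPolynomial

lemma aux_deg_ne_two (n : ℕ) : (∑ a ∈ Finset.range n, (Finset.Ioo a n).card) ≠ 2 := by
  intro h2
  have hre : ∀ a ∈ Finset.range n, (Finset.Ioo a n).card = n - 1 - a := by
    intro a _
    rw [Nat.card_Ioo]; omega
  rw [Finset.sum_congr rfl hre, Finset.sum_range_reflect (fun k => k) n] at h2
  have hg := Finset.sum_range_id_mul_two n
  rw [h2] at hg
  rcases Nat.lt_or_ge n 3 with h | h
  · interval_cases n <;> omega
  · have : 3 * 2 ≤ n * (n - 1) := Nat.mul_le_mul h (by omega)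
    omega

/-- With variables `x₁ = X 0, y₁ = X 1, x₂ = X 2, y₂ = X 3` among countably many
ambient variables: for any enumeration `z` of the ambient variables, the product
`(x₁ - y₁)(x₂ - y₂)` is not a finite linear combination of the Vandermonde
polynomials `VD_{n_i}(z_1, …, z_{n_i}) = ∏_{a < b < n_i} (X (z a) - X (z b))`.
Consequently the class `Σ·VD`, which contains `x₁ - y₁` and `x₂ - y₂`,
is not closed under multiplication. -/
theorem product_not_sum_of_VD (F : Type*) [RCLike F] (z : ℕ ≃ ℕ) :
    ¬ ∃ (s : ℕ) (_ : 1 ≤ s) (nn : Fin s → ℕ) (_ : ∀ i, 1 ≤ nn i) (α : Fin s → F),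
      ((X 0 - X 1) * (X 2 - X 3) : MvPolynomial ℕ F) =
        ∑ i, C (α i) *
          ∏ a ∈ Finset.range (nn i), ∏ b ∈ Finset.Ioo a (nn i), (X (z a) - X (z b)) := by
  rintro ⟨s, hs, nn, hnn, α, h⟩
  have hL : ((X 0 - X 1) * (X 2 - X 3) : MvPolynomial ℕ F).IsHomogeneous 2 :=
    ((isHomogeneous_X F 0).sub (isHomogeneous_X F 1)).mul
      ((isHomogeneous_X F 2).sub (isHomogeneous_X F 3))
  have hne : ((X 0 - X 1) * (X 2 - X 3) : MvPolynomial ℕ F) ≠ 0 := by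
    apply mul_ne_zero <;> exact sub_ne_zero.mpr (fun h => by
      simpa using (MvPolynomial.X_injective h))
  have H := congrArg (homogeneousComponent 2) h
  rw [homogeneousComponent_of_mem ((mem_homogeneousSubmodule _ _).mpr hL), if_pos rfl,
    map_sum] at H
  apply hne
  rw [H]
  apply Finset.sum_eq_zero
  intro i _
  have hP : (∏ a ∈ Finset.range (nn i), ∏ b ∈ Finset.Ioo a (nn i),
      (X (z a) - X (z b)) : MvPolynomial ℕ F).IsHomogeneous
      (∑ a ∈ Finset.range (nn i), (Finset.Ioo a (nn i)).card) := by
    apply IsHomogeneous.prod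
    intro a _
    have := IsHomogeneous.prod (Finset.Ioo a (nn i))
      (fun b => (X (z a) - X (z b) : MvPolynomial ℕ F)) (fun _ => 1)
      (fun b _ => (isHomogeneous_X F (z a)).sub (isHomogeneous_X F (z b)))
    simpa using this
  have hterm : ((C (α i) : MvPolynomial ℕ F) * ∏ a ∈ Finset.range (nn i),
      ∏ b ∈ Finset.Ioo a (nn i), (X (z a) - X (z b))).IsHomogeneous
      (∑ a ∈ Finset.range (nn i), (Finset.Ioo a (nn i)).card) := hP.C_mul _
  rw [homogeneousComponent_of_mem ((mem_homogeneousSubmodule _ _).mpr hterm),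
    if_neg (fun h2 => aux_deg_ne_two (nn i) h2.symm)]
end

section
/- Let F be ℝ or ℂ and let n, d ≥ 1. The power symmetric polynomial Pow_{n,d} = x_1^d + x_2^d + ⋯ + x_n^d can be written as Pow_{n,d} = Σ_{i=1}^{s} α_i f_i with s ≤ n(d+1), where each α_i ∈ F and each f_i ∈ VD_proj, i.e., each f_i = ∏_{1 ≤ a < b ≤ m_i}(ρ_a − ρ_b) for some m_i and ρ_1,…,ρ_{m_i} each equal to one of the variables x_1,…,x_n or a constant from F. -/
open MvPolynomial

private lemma vd_prod {F : Type*} [CommRing F] {n d : ℕ}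
    (x : MvPolynomial (Fin n) F) (c : Fin d → F) :
    (∏ a : Fin (d+1), ∏ b ∈ Finset.Ioi a,
        ((Fin.cases x (fun i => C (c i)) : Fin (d+1) → MvPolynomial (Fin n) F) a
          - Fin.cases x (fun i => C (c i)) b))
      = (∏ i : Fin d, (x - C (c i)))
          * C (∏ a : Fin d, ∏ b ∈ Finset.Ioi a, (c a - c b)) := by
  rw [Fin.prod_univ_succ]
  congr 1
  · rw [Fin.prod_Ioi_zero]
    simp
  · rw [map_prod]
    refine Finset.prod_congr rfl fun a _ => ?_
    rw [Fin.prod_Ioi_succ, map_prod]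
    refine Finset.prod_congr rfl fun b _ => ?_
    simp

private lemma univar (F : Type*) [Field F] [CharZero F] (d : ℕ) :
    ∃ β : Fin (d+1) → F,
      (Polynomial.X : Polynomial F) ^ d =
        ∑ k : Fin (d+1), Polynomial.C (β k) *
          ∏ i : Fin d,
            (Polynomial.X - Polynomial.C (((k.succAbove i : Fin (d+1)) : ℕ) : F)) := by
  set v : Fin (d+1) → F := fun a => ((a : ℕ) : F) with hv
  have hinj : Function.Injective v := fun a b h => by
    exact Fin.val_injective (Nat.cast_injective h)
  have hdeg : (Polynomial.X ^ d : Polynomial F).degree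
      < ((Finset.univ : Finset (Fin (d+1))).card : ℕ) := by
    simp [Polynomial.degree_X_pow]
    exact_mod_cast Nat.lt_succ_self d
  have h := Lagrange.eq_interpolate (v := v) (s := Finset.univ) hinj.injOn hdeg
  refine ⟨fun k => (v k) ^ d * ∏ i : Fin d, (v k - v (k.succAbove i))⁻¹, ?_⟩
  rw [h, Lagrange.interpolate_apply]
  refine Finset.sum_congr rfl fun k _ => ?_
  have hbasis : Lagrange.basis Finset.univ v k
      = Polynomial.C (∏ i : Fin d, (v k - v (k.succAbove i))⁻¹)
        * ∏ i : Fin d, (Polynomial.X - Polynomial.C (v (k.succAbove i))) := by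
    rw [Lagrange.basis]
    have herase : (Finset.univ : Finset (Fin (d+1))).erase k
        = Finset.univ.image k.succAbove := by
      rw [Fin.image_succAbove_univ, Finset.compl_singleton]
    rw [herase,
      Finset.prod_image (fun a _ b _ hab => Fin.succAbove_right_injective hab)]
    simp_rw [Lagrange.basisDivisor]
    rw [Finset.prod_mul_distrib, ← map_prod]
  rw [hbasis, Polynomial.eval_pow, Polynomial.eval_X, map_mul, mul_assoc]

/-- The power symmetric polynomial `Pow_{n,d} = x₁^d + ⋯ + xₙ^d` is an `F`-linear
combination of at most `n(d+1)` simple projections of Vandermonde polynomials. -/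
theorem power_symmetric_sum_of_VD_proj (F : Type*) [RCLike F] (n d : ℕ)
    (hn : 1 ≤ n) (hd : 1 ≤ d) :
    ∃ (s : ℕ) (_ : s ≤ n * (d + 1)) (α : Fin s → F)
      (f : Fin s → MvPolynomial (Fin n) F),
      (∀ i, ∃ (m : ℕ) (_ : 1 ≤ m) (ρ : Fin m → MvPolynomial (Fin n) F),
        (∀ a, IsVarOrConst (ρ a)) ∧
        f i = ∏ a : Fin m, ∏ b ∈ Finset.Ioi a, (ρ a - ρ b)) ∧
      (∑ j : Fin n, X j ^ d) = ∑ i, C (α i) * f i := by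
  obtain ⟨β, hβ⟩ := univar F d
  -- the constants used for the k-th Lagrange basis polynomial
  set cst : Fin (d+1) → Fin d → F :=
    fun k i => (((k.succAbove i : Fin (d+1)) : ℕ) : F) with hcst
  set W : Fin (d+1) → F :=
    fun k => ∏ a : Fin d, ∏ b ∈ Finset.Ioi a, (cst k a - cst k b) with hW
  have hWne : ∀ k, W k ≠ 0 := by
    intro k
    rw [hW]
    refine Finset.prod_ne_zero_iff.2 fun a _ => Finset.prod_ne_zero_iff.2 fun b hb => ?_
    have hab : a ≠ b := ne_of_lt (Finset.mem_Ioi.1 hb)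
    have : cst k a ≠ cst k b := by
      intro hEq
      exact hab (Fin.succAbove_right_injective
        (Fin.val_injective (Nat.cast_injective hEq)))
    exact sub_ne_zero.2 this
  -- the equivalence between Fin (n * (d+1)) and pairs
  let e : Fin n × Fin (d + 1) ≃ Fin (n * (d + 1)) := finProdFinEquiv
  -- data on the product side
  set ρfun : Fin n × Fin (d+1) → Fin (d+1) → MvPolynomial (Fin n) F :=
    fun p => Fin.cases (X p.1) (fun i => C (cst p.2 i)) with hρ
  set Ff : Fin n × Fin (d+1) → MvPolynomial (Fin n) F :=
    fun p => ∏ a : Fin (d+1), ∏ b ∈ Finset.Ioi a, (ρfun p a - ρfun p b) with hFf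
  set A : Fin n × Fin (d+1) → F := fun p => β p.2 * (W p.2)⁻¹ with hA
  refine ⟨n * (d + 1), le_refl _, fun i => A (e.symm i), fun i => Ff (e.symm i),
    fun i => ⟨d + 1, Nat.succ_le_succ (Nat.zero_le d), ρfun (e.symm i), ?_, rfl⟩, ?_⟩
  · intro a
    refine Fin.cases ?_ ?_ a
    · exact Or.inl ⟨(e.symm i).1, rfl⟩
    · intro b
      exact Or.inr ⟨cst (e.symm i).2 b, rfl⟩
  · rw [Equiv.sum_comp e.symm (fun p => C (A p) * Ff p)]
    rw [Fintype.sum_prod_type]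
    refine Finset.sum_congr rfl fun j _ => ?_
    -- apply aeval (X j) to the univariate identity
    have hj := congrArg (Polynomial.aeval (R := F) (X j : MvPolynomial (Fin n) F)) hβ
    simp only [map_pow, map_sum, map_mul, map_prod, map_sub, Polynomial.aeval_X,
      Polynomial.aeval_C, algebraMap_eq] at hj
    rw [hj]
    refine Finset.sum_congr rfl fun k _ => ?_
    have hvd := vd_prod (X j : MvPolynomial (Fin n) F) (cst k)
    have : Ff (j, k) = (∏ i : Fin d, (X j - C (cst k i))) * C (W k) := hvd
    rw [this, hA, hW]
    rw [map_mul, mul_comm (∏ i : Fin d, (X j - C (cst k i))) _, ← mul_assoc,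
      mul_assoc (C (β k)) _ _, ← map_mul, inv_mul_cancel₀ (hWne k), map_one, mul_one]
end

section
/- Let F be ℝ or ℂ and let f ∈ F[x_1,…,x_n] be a member of VD_proj, i.e., f = ∏_{1 ≤ a < b ≤ m}(ρ_a − ρ_b) for some m ≥ 1 where each ρ_a is either one of the variables x_1,…,x_n or a constant from F. Then for every subset S ⊆ {1,…,n} with |S| = k, the restricted evaluation dimension satisfies RED_S(f) ≤ (k+1)². -/
open MvPolynomial

/-- The restricted evaluation dimension `RED_S(f)`: the dimension of the span of all
polynomials obtained from `f` by substituting, for each `i ∈ S`, either `0`, `1`,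
or leaving `x_i` unchanged (`*`), and leaving all variables outside `S` unchanged. -/
noncomputable def RED {F : Type*} [Field F] {n : ℕ} (S : Finset (Fin n))
    (f : MvPolynomial (Fin n) F) : ℕ :=
  Module.finrank F (Submodule.span F
    {g : MvPolynomial (Fin n) F | ∃ σ : Fin n → MvPolynomial (Fin n) F,
      (∀ i ∈ S, σ i = 0 ∨ σ i = 1 ∨ σ i = X i) ∧
      (∀ i ∉ S, σ i = X i) ∧
      g = MvPolynomial.bind₁ σ f})

/-- The substitution determined by a pair `(o₀, o₁)`: the variable recorded in `o₀`
(if any) goes to `0`, the one in `o₁` goes to `1`, everything else stays. -/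
noncomputable def toSig {F : Type*} [Field F] {n : ℕ} (S : Finset (Fin n))
    (p : Option {i // i ∈ S} × Option {i // i ∈ S}) (i : Fin n) :
    MvPolynomial (Fin n) F :=
  if p.1.map Subtype.val = some i then 0
  else if p.2.map Subtype.val = some i then 1
  else X i

lemma vd_zero {F : Type*} [Field F] {n m : ℕ} (ρ : Fin m → MvPolynomial (Fin n) F)
    (σ : Fin n → MvPolynomial (Fin n) F) {a b : Fin m} (hab : a ≠ b)
    (h : bind₁ σ (ρ a) = bind₁ σ (ρ b)) :
    bind₁ σ (∏ a : Fin m, ∏ b ∈ Finset.Ioi a, (ρ a - ρ b)) = 0 := by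
  rw [map_prod]
  rcases lt_or_gt_of_ne hab with h' | h'
  · refine Finset.prod_eq_zero (Finset.mem_univ a) ?_
    rw [map_prod]
    refine Finset.prod_eq_zero (Finset.mem_Ioi.mpr h') ?_
    rw [map_sub, h, sub_self]
  · refine Finset.prod_eq_zero (Finset.mem_univ b) ?_
    rw [map_prod]
    refine Finset.prod_eq_zero (Finset.mem_Ioi.mpr h') ?_
    rw [map_sub, h, sub_self]

lemma vd_congr {F : Type*} [Field F] {n m : ℕ} (ρ : Fin m → MvPolynomial (Fin n) F)
    (σ τ : Fin n → MvPolynomial (Fin n) F) (h : ∀ a, bind₁ σ (ρ a) = bind₁ τ (ρ a)) :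
    bind₁ σ (∏ a : Fin m, ∏ b ∈ Finset.Ioi a, (ρ a - ρ b)) =
    bind₁ τ (∏ a : Fin m, ∏ b ∈ Finset.Ioi a, (ρ a - ρ b)) := by
  simp only [map_prod, map_sub, h]

lemma key_s14 {F : Type*} [Field F] {n m : ℕ} (ρ : Fin m → MvPolynomial (Fin n) F)
    (hρ : ∀ a, IsVarOrConst (ρ a)) (S : Finset (Fin n))
    (σ : Fin n → MvPolynomial (Fin n) F)
    (h1 : ∀ i ∈ S, σ i = 0 ∨ σ i = 1 ∨ σ i = X i)
    (h2 : ∀ i ∉ S, σ i = X i) :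
    bind₁ σ (∏ a : Fin m, ∏ b ∈ Finset.Ioi a, (ρ a - ρ b)) = 0 ∨
    ∃ p : Option {i // i ∈ S} × Option {i // i ∈ S},
      bind₁ σ (∏ a : Fin m, ∏ b ∈ Finset.Ioi a, (ρ a - ρ b)) =
      bind₁ (toSig S p) (∏ a : Fin m, ∏ b ∈ Finset.Ioi a, (ρ a - ρ b)) := by
  classical
  set Q0 : Fin n → Prop := fun i => i ∈ S ∧ σ i = 0 ∧ ∃ a, ρ a = X i with hQ0
  set Q1 : Fin n → Prop := fun i => i ∈ S ∧ σ i = 1 ∧ ∃ a, ρ a = X i with hQ1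
  by_cases hz0 : ∃ i j, i ≠ j ∧ Q0 i ∧ Q0 j
  · left
    obtain ⟨i, j, hij, ⟨_, hsi, a, ha⟩, ⟨_, hsj, b, hb⟩⟩ := hz0
    have hab : a ≠ b := by
      intro h; apply hij; apply X_injective (R := F); rw [← ha, ← hb, h]
    exact vd_zero ρ σ hab (by rw [ha, hb, bind₁_X_right, bind₁_X_right, hsi, hsj])
  by_cases hz1 : ∃ i j, i ≠ j ∧ Q1 i ∧ Q1 j
  · left
    obtain ⟨i, j, hij, ⟨_, hsi, a, ha⟩, ⟨_, hsj, b, hb⟩⟩ := hz1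
    have hab : a ≠ b := by
      intro h; apply hij; apply X_injective (R := F); rw [← ha, ← hb, h]
    exact vd_zero ρ σ hab (by rw [ha, hb, bind₁_X_right, bind₁_X_right, hsi, hsj])
  right
  push_neg at hz0 hz1
  set o₀ : Option {i // i ∈ S} :=
    if h : ∃ i, Q0 i then some ⟨h.choose, h.choose_spec.1⟩ else none with ho₀
  set o₁ : Option {i // i ∈ S} :=
    if h : ∃ i, Q1 i then some ⟨h.choose, h.choose_spec.1⟩ else none with ho₁
  have hA : ∀ j : Fin n, o₀.map Subtype.val = some j → Q0 j := by
    intro j hj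
    rw [ho₀] at hj
    split_ifs at hj with h
    · simp only [Option.map_some, Option.some.injEq] at hj
      rw [← hj]; exact h.choose_spec
    · simp at hj
  have hB : ∀ j : Fin n, o₁.map Subtype.val = some j → Q1 j := by
    intro j hj
    rw [ho₁] at hj
    split_ifs at hj with h
    · simp only [Option.map_some, Option.some.injEq] at hj
      rw [← hj]; exact h.choose_spec
    · simp at hj
  have hA' : ∀ j : Fin n, Q0 j → o₀.map Subtype.val = some j := by
    intro j hq
    have hex : ∃ i, Q0 i := ⟨j, hq⟩
    rw [ho₀, dif_pos hex]
    simp only [Option.map_some, Option.some.injEq]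
    by_contra hne
    exact hz0 _ _ hne hex.choose_spec hq
  have hB' : ∀ j : Fin n, Q1 j → o₁.map Subtype.val = some j := by
    intro j hq
    have hex : ∃ i, Q1 i := ⟨j, hq⟩
    rw [ho₁, dif_pos hex]
    simp only [Option.map_some, Option.some.injEq]
    by_contra hne
    exact hz1 _ _ hne hex.choose_spec hq
  refine ⟨(o₀, o₁), vd_congr ρ σ _ ?_⟩
  intro a
  rcases hρ a with ⟨j, hj⟩ | ⟨c, hc⟩
  swap
  · rw [hc, bind₁_C_right, bind₁_C_right]
  rw [hj, bind₁_X_right, bind₁_X_right]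
  show σ j = toSig S (o₀, o₁) j
  by_cases hjS : j ∈ S
  · rcases h1 j hjS with hs0 | hs1 | hsX
    · have hq : Q0 j := ⟨hjS, hs0, a, hj⟩
      rw [toSig]
      simp only [hA' j hq, if_pos rfl]
      exact hs0
    · have hq : Q1 j := ⟨hjS, hs1, a, hj⟩
      have hne0 : ¬ (o₀.map Subtype.val = some j) := by
        intro h
        have := (hA j h).2.1
        rw [hs1] at this
        exact one_ne_zero this
      rw [toSig]
      simp only [hne0, if_neg, ite_false, hB' j hq, if_pos rfl]
      · exact hs1
    · have hne0 : ¬ (o₀.map Subtype.val = some j) := by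
        intro h
        have := (hA j h).2.1
        rw [hsX] at this
        exact X_ne_zero j this
      have hne1 : ¬ (o₁.map Subtype.val = some j) := by
        intro h
        have h1' := (hB j h).2.1
        rw [hsX] at h1'
        have := congrArg (eval (0 : Fin n → F)) h1'
        simp at this
      rw [toSig]
      simp only [hne0, hne1, ite_false, if_neg]
      exact hsX
  · have hne0 : ¬ (o₀.map Subtype.val = some j) := fun h => hjS (hA j h).1
    have hne1 : ¬ (o₁.map Subtype.val = some j) := fun h => hjS (hB j h).1
    rw [toSig]
    simp only [hne0, hne1, ite_false, if_neg]
    exact h2 j hjS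

/-- Every simple projection of a Vandermonde polynomial has restricted evaluation
dimension at most `(k+1)²` with respect to any set `S` of `k` variables. -/
theorem RED_of_VD_proj_le (F : Type*) [RCLike F] (n k : ℕ)
    (f : MvPolynomial (Fin n) F)
    (hf : ∃ (m : ℕ) (_ : 1 ≤ m) (ρ : Fin m → MvPolynomial (Fin n) F),
      (∀ a, IsVarOrConst (ρ a)) ∧
      f = ∏ a : Fin m, ∏ b ∈ Finset.Ioi a, (ρ a - ρ b))
    (S : Finset (Fin n)) (hS : S.card = k) :
    RED S f ≤ (k + 1) ^ 2 := by
  classical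
  obtain ⟨m, hm, ρ, hρ, hfeq⟩ := hf
  set Φ : Option {i // i ∈ S} × Option {i // i ∈ S} → MvPolynomial (Fin n) F :=
    fun p => bind₁ (toSig S p) f with hΦ
  have hsub : {g : MvPolynomial (Fin n) F | ∃ σ : Fin n → MvPolynomial (Fin n) F,
      (∀ i ∈ S, σ i = 0 ∨ σ i = 1 ∨ σ i = X i) ∧
      (∀ i ∉ S, σ i = X i) ∧
      g = MvPolynomial.bind₁ σ f} ⊆ insert 0 (Set.range Φ) := by
    rintro g ⟨σ, h1, h2, rfl⟩
    subst hfeq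
    rcases key_s14 ρ hρ S σ h1 h2 with h | ⟨p, hp⟩
    · rw [h]; exact Set.mem_insert _ _
    · exact Set.mem_insert_of_mem _ ⟨p, hp.symm⟩
  have hfin : FiniteDimensional F
      (Submodule.span F (insert (0 : MvPolynomial (Fin n) F) (Set.range Φ))) :=
    FiniteDimensional.span_of_finite F
      ((Set.finite_range Φ).insert 0)
  rw [RED]
  calc Module.finrank F (Submodule.span F _)
      ≤ Module.finrank F (Submodule.span F (insert 0 (Set.range Φ))) :=
        Submodule.finrank_mono (Submodule.span_mono hsub)
    _ = Module.finrank F (Submodule.span F (Set.range Φ)) := by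
        rw [Submodule.span_insert_zero]
    _ ≤ Fintype.card (Option {i // i ∈ S} × Option {i // i ∈ S}) :=
        finrank_range_le_card Φ
    _ = (k + 1) ^ 2 := by
        simp [Fintype.card_option, Fintype.card_coe, hS, sq]
end

section
/- Let F be ℝ or ℂ, let 1 ≤ k ≤ n, and let Sym_{n,k} ∈ F[x_1,…,x_n] be the elementary symmetric polynomial of degree k in n variables. Then for every subset S ⊆ {1,…,n} with |S| = k, the restricted evaluation dimension satisfies RED_S(Sym_{n,k}) ≥ 2^k − 1. -/
open MvPolynomial

section Aux
open Finset
variable {F : Type*} [Field F] {n : ℕ}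

noncomputable def expOf (B : Finset (Fin n)) : Fin n →₀ ℕ := ∑ i ∈ B, Finsupp.single i 1

lemma expOf_apply (B : Finset (Fin n)) (j : Fin n) :
    expOf B j = if j ∈ B then 1 else 0 := by
  classical
  simp [expOf, Finsupp.finset_sum_apply, Finsupp.single_apply, Finset.sum_ite_eq' B j]

lemma expOf_inj : Function.Injective (expOf (n := n)) := by
  intro U V h
  ext j
  have := congrArg (fun f => f j) h
  simp only [expOf_apply] at this
  by_cases hU : j ∈ U <;> by_cases hV : j ∈ V <;> simp [hU, hV] at this ⊢

noncomputable def subst (F : Type*) [Field F] {n : ℕ} (S A : Finset (Fin n)) :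
    Fin n → MvPolynomial (Fin n) F :=
  fun i => if i ∈ S \ A then 1 else X i

lemma bind_subst_esymm (S A : Finset (Fin n)) (k : ℕ) :
    bind₁ (subst F S A) (esymm (Fin n) F k)
      = ∑ T ∈ powersetCard k univ, monomial (expOf (T \ (S \ A))) 1 := by
  classical
  rw [esymm, map_sum]
  refine Finset.sum_congr rfl fun T _ => ?_
  rw [map_prod]
  simp only [bind₁_X_right]
  have h1 : ∏ i ∈ T, (subst F S A i) = ∏ i ∈ T \ (S \ A), X i := by
    unfold subst
    rw [← Finset.prod_subset (Finset.sdiff_subset (t := S \ A))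
      (fun x hx hx' => by simp only [Finset.mem_sdiff, not_and, not_not] at hx'; simp [hx' hx])]
    refine Finset.prod_congr rfl fun i hi => ?_
    simp [(Finset.mem_sdiff.mp hi).2]
  rw [h1, expOf, monomial_sum_one]
  refine Finset.prod_congr rfl fun i _ => ?_
  rw [X]

lemma key_comb {S A B T : Finset (Fin n)} {k : ℕ} (hA : A ⊆ S) (hB : B ⊆ S)
    (hS : S.card = k) (hT : T.card = k) :
    T \ (S \ A) = B ↔ (A = B ∧ T = S) := by
  classical
  constructor
  · intro h
    have hBA : B ⊆ A := by
      intro x hx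
      have hx2 : x ∈ T \ (S \ A) := by rw [h]; exact hx
      rcases Finset.mem_sdiff.mp hx2 with ⟨hxT, hxn⟩
      have hxS : x ∈ S := hB hx
      by_contra hxA
      exact hxn (Finset.mem_sdiff.mpr ⟨hxS, hxA⟩)
    have hsplit : (T \ (S \ A)) ∪ (T ∩ (S \ A)) = T := Finset.sdiff_union_inter T (S \ A)
    have hcard : B.card + (T ∩ (S \ A)).card = k := by
      have := Finset.card_sdiff_add_card_inter T (S \ A)
      rw [h] at this; rw [this, hT]
    have hle : (T ∩ (S \ A)).card ≤ (S \ A).card := Finset.card_le_card Finset.inter_subset_right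
    have hSA : (S \ A).card = k - A.card := by rw [Finset.card_sdiff_of_subset hA, hS]
    have hAk : A.card ≤ k := hS ▸ Finset.card_le_card hA
    have hBA' : B.card ≤ A.card := Finset.card_le_card hBA
    have hAB : A = B := (Finset.eq_of_subset_of_card_le hBA (by omega)).symm
    refine ⟨hAB, ?_⟩
    have h1 : T ∩ (S \ A) = S \ A := Finset.eq_of_subset_of_card_le
      Finset.inter_subset_right (by omega)
    have h2 : T = B ∪ (S \ A) := by rw [← h1, ← h, hsplit]
    rw [h2, ← hAB, Finset.union_comm, Finset.sdiff_union_of_subset hA]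
  · rintro ⟨rfl, rfl⟩
    rw [Finset.sdiff_sdiff_self_left, Finset.inter_eq_right.mpr hA]

lemma coeff_bind_subst {S A B : Finset (Fin n)} {k : ℕ} (hA : A ⊆ S) (hB : B ⊆ S)
    (hS : S.card = k) :
    coeff (expOf B) (bind₁ (subst F S A) (esymm (Fin n) F k))
      = if A = B then 1 else 0 := by
  classical
  rw [bind_subst_esymm, coeff_sum]
  have h1 : ∀ T ∈ powersetCard k (univ : Finset (Fin n)),
      coeff (expOf B) (monomial (expOf (T \ (S \ A))) (1 : F))
        = if A = B ∧ T = S then 1 else 0 := by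
    intro T hT
    rw [coeff_monomial]
    congr 1
    rw [eq_iff_iff]
    constructor
    · intro h
      exact (key_comb hA hB hS (Finset.mem_powersetCard_univ.mp hT)).mp (expOf_inj h)
    · intro h
      rw [(key_comb hA hB hS (Finset.mem_powersetCard_univ.mp hT)).mpr h]
  rw [Finset.sum_congr rfl h1]
  by_cases hAB : A = B
  · simp only [hAB, true_and]
    rw [Finset.sum_ite_eq' _ S (fun _ => (1:F)),
      if_pos (Finset.mem_powersetCard_univ.mpr hS), if_pos trivial]
  · simp [hAB]

end Aux

/-- For any set `S` of `k` variables, the elementary symmetric polynomial of degree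
`k` in `n` variables has restricted evaluation dimension at least `2^k - 1`. -/
theorem RED_esymm_lower_bound (F : Type*) [RCLike F] (n k : ℕ)
    (hk : 1 ≤ k) (hkn : k ≤ n)
    (S : Finset (Fin n)) (hS : S.card = k) :
    2 ^ k - 1 ≤ RED S (MvPolynomial.esymm (Fin n) F k) := by
  classical
  set f := MvPolynomial.esymm (Fin n) F k with hf
  set G : Set (MvPolynomial (Fin n) F) :=
    {g : MvPolynomial (Fin n) F | ∃ σ : Fin n → MvPolynomial (Fin n) F,
      (∀ i ∈ S, σ i = 0 ∨ σ i = 1 ∨ σ i = X i) ∧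
      (∀ i ∉ S, σ i = X i) ∧
      g = MvPolynomial.bind₁ σ f} with hG
  -- each restriction belongs to G
  have hmem : ∀ A : Finset (Fin n), A ⊆ S → bind₁ (subst F S A) f ∈ G := by
    intro A hA
    refine ⟨subst F S A, fun i hi => ?_, fun i hi => ?_, rfl⟩
    · by_cases hiA : i ∈ A
      · right; right
        simp [subst, hiA]
      · right; left
        simp only [subst, Finset.mem_sdiff, hi, hiA, not_false_iff, and_true, if_true]
    · have : i ∉ S \ A := fun h => hi (Finset.mem_sdiff.mp h).1
      simp only [subst, this, if_false]
  -- G is finite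
  have hGfin : G.Finite := by
    have hsub : G ⊆ (fun σ : Fin n → MvPolynomial (Fin n) F => bind₁ σ f) ''
        (Set.pi Set.univ (fun i => if i ∈ S then ({0, 1, X i} : Set (MvPolynomial (Fin n) F))
          else {X i})) := by
      rintro g ⟨σ, h1, h2, rfl⟩
      refine ⟨σ, fun i _ => ?_, rfl⟩
      by_cases hi : i ∈ S
      · simp only [hi, if_true]
        rcases h1 i hi with h | h | h <;> simp [h]
      · simp only [hi, if_false, h2 i hi, Set.mem_singleton_iff]
    refine Set.Finite.subset (Set.Finite.image _ (Set.Finite.pi fun i => ?_)) hsub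
    split_ifs <;> exact Set.toFinite _
  have hFD : FiniteDimensional F (Submodule.span F G) := FiniteDimensional.span_of_finite F hGfin
  -- the linearly independent family
  have hli : LinearIndependent F
      (fun A : ↥S.powerset => bind₁ (subst F S A.1) f) := by
    rw [Fintype.linearIndependent_iff]
    intro g hg B
    have hcoef := congrArg (coeff (expOf B.1)) hg
    rw [coeff_sum] at hcoef
    simp only [coeff_smul, coeff_zero] at hcoef
    have hB : B.1 ⊆ S := Finset.mem_powerset.mp B.2
    have h2 : ∀ A : ↥S.powerset,
        g A • coeff (expOf B.1) (bind₁ (subst F S A.1) f) = if A = B then g A else 0 := by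
      intro A
      rw [hf, coeff_bind_subst (Finset.mem_powerset.mp A.2) hB hS]
      by_cases h : A = B
      · simp [h, Subtype.ext_iff.mp h]
      · have : A.1 ≠ B.1 := fun hh => h (Subtype.ext hh)
        simp [h, this]
    rw [Finset.sum_congr rfl (fun A _ => h2 A), Finset.sum_ite_eq' _ B,
      if_pos (Finset.mem_univ B)] at hcoef
    exact hcoef
  have hli' : LinearIndependent F
      (fun A : ↥S.powerset =>
        (⟨bind₁ (subst F S A.1) f, Submodule.subset_span (hmem A.1 (Finset.mem_powerset.mp A.2))⟩ :
          Submodule.span F G)) := by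
    apply LinearIndependent.of_comp (Submodule.span F G).subtype
    exact hli
  have hcard := hli'.fintype_card_le_finrank
  rw [Fintype.card_coe, Finset.card_powerset, hS] at hcard
  have hre : RED S f = Module.finrank F (Submodule.span F G) := rfl
  rw [hre]
  omega
end
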